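/- Carrier- and color-preserving simplicial maps can only decrease the class: for every 2-process affine task A on n = 3^ℓ (ℓ ≥ 1) and every chromatic carrier-preserving simplicial map δ from A to the subdivided 1-simplex on {0,…,m} (m = 3^{ℓ'}, ℓ' ≥ 1), the image task δ(A) is a 2-process affine task on m and class(δ(A)) ⊑ class(A), where ⊑ is the class order. -/

import Mathlib

/-!
2-process affine tasks, modeled combinatorially.
The ℓ-th iterated standard chromatic subdivision of the 1-simplex is the path
graph on vertices `{0, …, n}`, `n = 3^ℓ`, whose edges are the pairs `{i, i+1}`
for `0 ≤ i < n`; vertex `i` has color `i % 2`, vertex `0` is the solo vertex of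
process `p₀` and vertex `n` the solo vertex of `p₁`.  An edge `{i, i+1}` is
encoded by its left endpoint `i`, and a 2-process affine task on `n` is a
nonempty finite set `A : Finset ℕ` of such edges (left endpoints `< n`).
-/

/-- `StepRel A x y`: the vertices `x` and `y` are joined by an edge of `A`
(the edge `{i, i+1}` being encoded by its left endpoint `i`). -/
def StepRel (A : Finset ℕ) (x y : ℕ) : Prop :=
  (y = x + 1 ∧ x ∈ A) ∨ (x = y + 1 ∧ y ∈ A)

/-- `P₁(A)`: the vertices `0` and `n` are joined by a path all of whose edges
lie in `A`. -/
def P1 (n : ℕ) (A : Finset ℕ) : Prop := Relation.ReflTransGen (StepRel A) 0 n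

/-- `P₂(A)`: the edge `{0, 1}` belongs to `A`. -/
def P2 (A : Finset ℕ) : Prop := 0 ∈ A

/-- `P₃(A)`: the edge `{n-1, n}` belongs to `A`. -/
def P3 (n : ℕ) (A : Finset ℕ) : Prop := n - 1 ∈ A

open Classical in
/-- The class of a 2-process affine task `A` on `{0,…,n}`:
`1` if `P₁(A)`; `2` if `¬P₁ ∧ P₂ ∧ P₃`; `3` if `¬P₁ ∧ P₂ ∧ ¬P₃`;
`4` if `¬P₁ ∧ ¬P₂ ∧ P₃`; `5` if `¬P₁ ∧ ¬P₂ ∧ ¬P₃`. -/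
noncomputable def classOf (n : ℕ) (A : Finset ℕ) : ℕ :=
  if P1 n A then 1
  else if P2 A then (if P3 n A then 2 else 3)
  else (if P3 n A then 4 else 5)

/-- The class order `⊑` on `{1, …, 5}`: `c ⊑ c'` iff `c = c'`, or `c = 1`,
or `c' = 5`, or (`c = 2` and `c' ∈ {3, 4}`). -/
def ClassLE (c c' : ℕ) : Prop :=
  c = c' ∨ c = 1 ∨ c' = 5 ∨ (c = 2 ∧ (c' = 3 ∨ c' = 4))

/-- The composition `A ⋆ B` of a task `A` on `{0,…,n}` with a task `B` on
`{0,…,m}`: each edge of `A` is replaced by an appropriately oriented copy of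
`B`; its edges are `{i·m + r, i·m + r + 1}` for `{i, i+1} ∈ A` and
`{j, j+1} ∈ B`, where `r = j` if `i` is even and `r = m - 1 - j` if `i` is odd
(edges encoded by left endpoints). -/
def comp (m : ℕ) (A B : Finset ℕ) : Finset ℕ :=
  (A ×ˢ B).image fun p => p.1 * m + (if Even p.1 then p.2 else m - 1 - p.2)

/-- `iterTask n A k` is the iterate `A^{⋆k}` (for `k ≥ 1`) of a task `A` on
`{0,…,n}`, a task on `{0,…,n^k}`: `A^{⋆1} = A`, `A^{⋆(k+1)} = A^{⋆k} ⋆ A`.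
(The value at `k = 0` is irrelevant and set to `A`.) -/
def iterTask (n : ℕ) (A : Finset ℕ) : ℕ → Finset ℕ
  | 0 => A
  | 1 => A
  | k + 2 => comp n (iterTask n A (k + 1)) A

/-- A chromatic carrier-preserving simplicial map `δ` from a task `A` on
`{0,…,n}` to the subdivided 1-simplex on `{0,…,m}`: `δ` maps `{0,…,n}` to
`{0,…,m}`; `δ i ≡ i (mod 2)` for every vertex incident to an edge of `A`;
`|δ (i+1) - δ i| = 1` for every edge `{i, i+1} ∈ A`; `δ 0 = 0` whenever
`{0,1} ∈ A`; and `δ n = m` whenever `{n-1, n} ∈ A`. -/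
def IsCCMap (n m : ℕ) (A : Finset ℕ) (δ : ℕ → ℕ) : Prop :=
  (∀ i ≤ n, δ i ≤ m) ∧
  (∀ i ∈ A, δ i % 2 = i % 2 ∧ δ (i + 1) % 2 = (i + 1) % 2) ∧
  (∀ i ∈ A, δ (i + 1) = δ i + 1 ∨ δ i = δ (i + 1) + 1) ∧
  (0 ∈ A → δ 0 = 0) ∧
  (n - 1 ∈ A → δ n = m)

/-- The image task `δ(A) = { {δ i, δ (i+1)} : {i, i+1} ∈ A }`
(edges encoded by left endpoints, i.e. by `min (δ i) (δ (i+1))`). -/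
def imageTask (A : Finset ℕ) (δ : ℕ → ℕ) : Finset ℕ :=
  A.image fun i => min (δ i) (δ (i + 1))

/-- `Solves m n B A`: the affine model `B*` of a task `B` on `{0,…,m}` solves
the task `A` on `{0,…,n}`, i.e. there exist `k ≥ 1` and a chromatic
carrier-preserving simplicial map `δ` from `B^{⋆k}` (a task on `{0,…,m^k}`)
to the subdivided 1-simplex on `{0,…,n}` with `δ(B^{⋆k}) ⊆ A`. -/
def Solves (m n : ℕ) (B A : Finset ℕ) : Prop :=
  ∃ k, 1 ≤ k ∧ ∃ δ : ℕ → ℕ,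
    IsCCMap (m ^ k) n (iterTask m B k) δ ∧ imageTask (iterTask m B k) δ ⊆ A

/-- Chromatic carrier-preserving simplicial maps can only decrease the class:
for every 2-process affine task `A` on `n = 3^ℓ` and every chromatic
carrier-preserving simplicial map `δ` from `A` to the subdivided 1-simplex on
`{0,…,m}` (`m = 3^ℓ'`), the image `δ(A)` is a 2-process affine task on `m`
and `class(δ(A)) ⊑ class(A)`. -/

lemma p1_mem_zero {n : ℕ} {A : Finset ℕ} (hn : 0 < n) (h : P1 n A) : 0 ∈ A := by
  rcases (Relation.ReflTransGen.cases_head h) with h0 | ⟨b, hb, _⟩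
  · omega
  · rcases hb with ⟨_, h⟩ | ⟨h, _⟩
    · exact h
    · omega

lemma p1_mem_last {n : ℕ} {A : Finset ℕ} (hlt : ∀ i ∈ A, i < n) (h : P1 n A)
    (hn : 0 < n) : n - 1 ∈ A := by
  rcases (Relation.ReflTransGen.cases_tail h) with h0 | ⟨b, _, hb⟩
  · omega
  · rcases hb with ⟨he, h⟩ | ⟨_, h⟩
    · have : b = n - 1 := by omega
      exact this ▸ h
    · exact absurd (hlt n h) (by omega)

theorem map_class_le
    (ℓ ℓ' n m : ℕ) (hℓ : 1 ≤ ℓ) (hℓ' : 1 ≤ ℓ') (hn : n = 3 ^ ℓ) (hm : m = 3 ^ ℓ')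
    (A : Finset ℕ) (hne : A.Nonempty) (hlt : ∀ i ∈ A, i < n)
    (δ : ℕ → ℕ) (hδ : IsCCMap n m A δ) :
    (imageTask A δ).Nonempty ∧ (∀ i ∈ imageTask A δ, i < m) ∧
      ClassLE (classOf m (imageTask A δ)) (classOf n A) := by
  
  obtain ⟨hbd, hpar, hstep, h0, hN⟩ := hδ
  have hn0 : 0 < n := by rw [hn]; positivity
  have hm0 : 0 < m := by rw [hm]; positivity
  -- basic facts
  have hmin : ∀ i ∈ A, min (δ i) (δ (i + 1)) ∈ imageTask A δ := fun i hi =>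
    Finset.mem_image.2 ⟨i, hi, rfl⟩
  have hlt' : ∀ j ∈ imageTask A δ, j < m := by
    intro j hj
    obtain ⟨i, hi, rfl⟩ := Finset.mem_image.1 hj
    have h1 : δ i ≤ m := hbd i (le_of_lt (hlt i hi))
    have h2 : δ (i + 1) ≤ m := hbd (i + 1) (hlt i hi)
    rcases hstep i hi with h | h <;> omega
  have hP2 : 0 ∈ A → (0 : ℕ) ∈ imageTask A δ := by
    intro h
    have h0' := h0 h
    have hd1 : δ (0 + 1) = 1 := by rcases hstep 0 h with hs | hs <;> omega
    have := hmin 0 h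
    rw [h0', hd1] at this
    simpa using this
  have hP3 : n - 1 ∈ A → m - 1 ∈ imageTask A δ := by
    intro h
    have hNm := hN h
    have heq : n - 1 + 1 = n := by omega
    have hb : δ (n - 1) ≤ m := hbd (n - 1) (by omega)
    have hd : δ (n - 1) = m - 1 := by
      rcases hstep (n - 1) h with hs | hs <;> rw [heq, hNm] at hs <;> omega
    have := hmin (n - 1) h
    rw [heq, hNm, hd, min_eq_left (by omega)] at this
    exact this
  have hP1 : P1 n A → P1 m (imageTask A δ) := by
    intro h
    have h0' : δ 0 = 0 := h0 (p1_mem_zero hn0 h)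
    have hN' : δ n = m := hN (p1_mem_last hlt h hn0)
    have lift : ∀ a b : ℕ, StepRel A a b → StepRel (imageTask A δ) (δ a) (δ b) := by
      intro a b hab
      rcases hab with ⟨rfl, ha⟩ | ⟨rfl, hb⟩
      · rcases hstep a ha with hs | hs
        · exact Or.inl ⟨hs, by have := hmin a ha; rwa [min_eq_left (by omega)] at this⟩
        · exact Or.inr ⟨hs, by have := hmin a ha; rwa [min_eq_right (by omega)] at this⟩
      · rcases hstep b hb with hs | hs
        · exact Or.inr ⟨hs, by have := hmin b hb; rwa [min_eq_left (by omega)] at this⟩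
        · exact Or.inl ⟨hs, by have := hmin b hb; rwa [min_eq_right (by omega)] at this⟩
    have : Relation.ReflTransGen (StepRel (imageTask A δ)) (δ 0) (δ n) :=
      Relation.ReflTransGen.lift δ lift _ _ h
    rwa [h0', hN'] at this
  refine ⟨hne.image _, hlt', ?_⟩
  unfold classOf ClassLE P2 P3
  split_ifs with h1 h2 h3 h4 h5 h6 h7 h8 h9 h10 h11 h12 h13 h14 <;>
    simp_all [P2, P3] <;> omega
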